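/- Let φ and ψ be finite potent endomorphisms of a k-vector space V such that the commutator φ∘ψ − ψ∘φ has finite rank. Let A ⊆ End_k(V) be the unital k-subalgebra generated by φ and ψ, and let F = φ∘A + ψ∘A = {φ∘a + ψ∘b : a, b ∈ A}, a k-subspace of End_k(V). Then F is a finite potent subspace of End_k(V); i.e., there exists n ≥ 1 such that for every f₁,…,fₙ ∈ F the image (f₁∘⋯∘fₙ)(V) is finite-dimensional. -/

import Mathlib

open LinearMap

/-- A subspace `F ⊆ End_k(V)` is a *finite potent subspace* if there is `n ≥ 1` such that
any composition of `n` elements of `F` has finite-dimensional image. -/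
def IsFinitePotentSubspace {k V : Type*} [Field k] [AddCommGroup V] [Module k V]
    (F : Submodule k (V →ₗ[k] V)) : Prop :=
  ∃ n : ℕ, 1 ≤ n ∧ ∀ f : Fin n → (V →ₗ[k] V), (∀ i, f i ∈ F) →
    FiniteDimensional k (LinearMap.range (List.ofFn f).prod)

section Aux

variable {k V : Type*} [Field k] [AddCommGroup V] [Module k V]

private lemma fr_add {f g : V →ₗ[k] V} (hf : FiniteDimensional k (range f))
    (hg : FiniteDimensional k (range g)) : FiniteDimensional k (range (f + g)) := by
  haveI := hf; haveI := hg
  have h : range (f + g) ≤ range f ⊔ range g := by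
    rintro _ ⟨v, rfl⟩; exact Submodule.add_mem_sup ⟨v, rfl⟩ ⟨v, rfl⟩
  exact Submodule.finiteDimensional_of_le h

private lemma fr_mul_left (f : V →ₗ[k] V) {g : V →ₗ[k] V}
    (hg : FiniteDimensional k (range g)) : FiniteDimensional k (range (f * g)) := by
  haveI := hg
  have : (f * g : V →ₗ[k] V) = f.comp g := rfl
  rw [this, LinearMap.range_comp]
  exact Module.Finite.map _ f

private lemma fr_mul_right {f : V →ₗ[k] V} (g : V →ₗ[k] V)
    (hf : FiniteDimensional k (range f)) : FiniteDimensional k (range (f * g)) := by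
  haveI := hf
  exact Submodule.finiteDimensional_of_le (LinearMap.range_comp_le_range g f)

/-- The congruence on `End_k(V)` identifying maps whose difference has finite rank. -/
private def frCon (k V : Type*) [Field k] [AddCommGroup V] [Module k V] :
    RingCon (V →ₗ[k] V) where
  r f g := FiniteDimensional k (range (f - g))
  iseqv := by
    constructor
    · intro f
      show FiniteDimensional k (range (f - f))
      rw [sub_self, LinearMap.range_zero]
      infer_instance
    · intro f g h
      have : g - f = -(f - g) := by abel
      rw [this, LinearMap.range_neg]; exact h
    · intro f g h h1 h2
      have : f - h = (f - g) + (g - h) := by abel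
      rw [this]; exact fr_add h1 h2
  mul' := by
    intro w x y z h1 h2
    have : w * y - x * z = (w - x) * y + x * (y - z) := by noncomm_ring
    show FiniteDimensional k (range (w * y - x * z))
    rw [this]
    exact fr_add (fr_mul_right _ h1) (fr_mul_left _ h2)
  add' := by
    intro w x y z h1 h2
    have : (w + y) - (x + z) = (w - x) + (y - z) := by abel
    show FiniteDimensional k (range ((w + y) - (x + z)))
    rw [this]
    exact fr_add h1 h2

private lemma commute_key {Q : Type*} [Ring Q] {x y a c : Q}
    (hax : Commute a x) (hay : Commute a y) (s t : ℕ) :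
    (x * a) * (x ^ s * y ^ t * c) = x ^ (s + 1) * y ^ t * (a * c) := by
  have h1 : a * x ^ s = x ^ s * a := (hax.pow_right s).eq
  have h2 : a * y ^ t = y ^ t * a := (hay.pow_right t).eq
  simp only [pow_succ', mul_assoc]
  rw [← mul_assoc a, h1, mul_assoc, ← mul_assoc a, h2, mul_assoc]

private lemma commute_key' {Q : Type*} [Ring Q] {x y b c : Q}
    (hxy : Commute x y) (hbx : Commute b x) (hby : Commute b y) (s t : ℕ) :
    (y * b) * (x ^ s * y ^ t * c) = x ^ s * y ^ (t + 1) * (b * c) := by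
  have h1 : b * x ^ s = x ^ s * b := (hbx.pow_right s).eq
  have h2 : b * y ^ t = y ^ t * b := (hby.pow_right t).eq
  have h3 : y * x ^ s = x ^ s * y := ((hxy.symm).pow_right s).eq
  simp only [pow_succ', mul_assoc]
  rw [← mul_assoc b, h1, mul_assoc, ← mul_assoc y, h3, mul_assoc, ← mul_assoc b, h2, mul_assoc]

end Aux

/-- if `φ`, `ψ` are finite potent with finite rank commutator, and `A` is the
unital subalgebra of `End_k(V)` generated by `φ` and `ψ`, then `F = φ∘A + ψ∘A` is a
finite potent subspace of `End_k(V)`. -/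
theorem isFinitePotentSubspace_of_finiteRank_commutator
    {k V : Type*} [Field k] [AddCommGroup V] [Module k V]
    (φ ψ : V →ₗ[k] V)
    (hφ : ∃ n : ℕ, 1 ≤ n ∧ FiniteDimensional k (LinearMap.range (φ ^ n)))
    (hψ : ∃ n : ℕ, 1 ≤ n ∧ FiniteDimensional k (LinearMap.range (ψ ^ n)))
    (hcomm : FiniteDimensional k (LinearMap.range (φ * ψ - ψ * φ)))
    (A : Subalgebra k (V →ₗ[k] V)) (hA : A = Algebra.adjoin k {φ, ψ})
    (F : Submodule k (V →ₗ[k] V))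
    (hF : F = Submodule.map (LinearMap.mulLeft k φ) (Subalgebra.toSubmodule A)
            ⊔ Submodule.map (LinearMap.mulLeft k ψ) (Subalgebra.toSubmodule A)) :
    IsFinitePotentSubspace F := by
  obtain ⟨p, hp1, hp⟩ := hφ
  obtain ⟨q, hq1, hq⟩ := hψ
  set c := frCon k V with hc
  let π : (V →ₗ[k] V) →+* c.Quotient := c.mk'
  have hπ : ∀ f : V →ₗ[k] V, π f = (f : c.Quotient) := fun f => rfl
  -- elements of finite rank are sent to 0
  have hzero : ∀ f : V →ₗ[k] V, FiniteDimensional k (LinearMap.range f) → π f = 0 := by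
    intro f h
    have : π f = π 0 := by
      rw [hπ, hπ]
      exact c.eq.mpr (show FiniteDimensional k (range (f - 0)) by rwa [sub_zero])
    rwa [map_zero] at this
  have hzero' : ∀ f : V →ₗ[k] V, π f = 0 → FiniteDimensional k (LinearMap.range f) := by
    intro f h
    have : π f = π 0 := by rw [h, map_zero]
    have := c.eq.mp ((hπ f) ▸ (hπ 0) ▸ this)
    have h2 : FiniteDimensional k (range (f - 0)) := this
    rwa [sub_zero] at h2
  set x := π φ with hxdef
  set y := π ψ with hydef
  have hxy : Commute x y := by
    have h0 : π (φ * ψ - ψ * φ) = 0 := hzero _ hcomm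
    rw [map_sub, map_mul, map_mul, sub_eq_zero] at h0
    exact h0
  have hxp : x ^ p = 0 := by rw [hxdef, ← map_pow]; exact hzero _ hp
  have hyq : y ^ q = 0 := by rw [hydef, ← map_pow]; exact hzero _ hq
  set C := Subring.centralizer ({x, y} : Set c.Quotient) with hCdef
  have hmemC : ∀ a ∈ A, π a ∈ C := by
    rw [hA]
    intro a ha
    induction ha using Algebra.adjoin_induction with
    | mem z hz =>
      rcases hz with hz | hz
      · subst hz
        rw [Subring.mem_centralizer_iff]
        rintro g (rfl | rfl)
        · rfl
        · exact hxy.symm.eq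
      · simp only [Set.mem_singleton_iff] at hz
        subst hz
        rw [Subring.mem_centralizer_iff]
        rintro g (rfl | rfl)
        · exact hxy.eq
        · rfl
    | algebraMap r =>
      rw [Subring.mem_centralizer_iff]
      rintro g (rfl | rfl)
      · have := Algebra.commutes r φ
        have := congrArg π this
        rw [map_mul, map_mul] at this
        exact this.symm
      · have := Algebra.commutes r ψ
        have := congrArg π this
        rw [map_mul, map_mul] at this
        exact this.symm
    | add u v hu hv hu' hv' => rw [map_add]; exact add_mem hu' hv'
    | mul u v hu hv hu' hv' => rw [map_mul]; exact mul_mem hu' hv'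
  -- decomposition of elements of F
  have hFmem : ∀ f ∈ F, ∃ a b : V →ₗ[k] V, a ∈ A ∧ b ∈ A ∧ f = φ * a + ψ * b := by
    intro f hf
    rw [hF] at hf
    rcases Submodule.mem_sup.mp hf with ⟨u, hu, v, hv, rfl⟩
    rcases hu with ⟨a, ha, rfl⟩
    rcases hv with ⟨b, hb, rfl⟩
    exact ⟨a, b, ha, hb, by simp [LinearMap.mulLeft_apply]⟩
  -- the filtration
  set S : ℕ → Set c.Quotient :=
    fun n => {z | ∃ s t cc, s + t = n ∧ cc ∈ C ∧ z = x ^ s * y ^ t * cc} with hSdef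
  set T : ℕ → AddSubgroup c.Quotient := fun n => AddSubgroup.closure (S n) with hTdef
  have hstep : ∀ (n : ℕ) (a b : c.Quotient), a ∈ C → b ∈ C →
      ∀ z ∈ T n, (x * a + y * b) * z ∈ T (n + 1) := by
    intro n a b ha hb z hz
    have hax : Commute a x := Commute.symm
      (by rw [Commute, SemiconjBy]; exact (Subring.mem_centralizer_iff.mp ha x (by simp)))
    have hay : Commute a y := Commute.symm
      (by rw [Commute, SemiconjBy]; exact (Subring.mem_centralizer_iff.mp ha y (by simp)))
    have hbx : Commute b x := Commute.symm
      (by rw [Commute, SemiconjBy]; exact (Subring.mem_centralizer_iff.mp hb x (by simp)))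
    have hby : Commute b y := Commute.symm
      (by rw [Commute, SemiconjBy]; exact (Subring.mem_centralizer_iff.mp hb y (by simp)))
    induction hz using AddSubgroup.closure_induction with
    | mem w hw =>
      obtain ⟨s, t, cc, hst, hcc, rfl⟩ := hw
      rw [add_mul, commute_key hax hay, commute_key' hxy hbx hby]
      exact add_mem
        (AddSubgroup.subset_closure ⟨s + 1, t, a * cc, by omega, mul_mem ha hcc, rfl⟩)
        (AddSubgroup.subset_closure ⟨s, t + 1, b * cc, by omega, mul_mem hb hcc, rfl⟩)
    | zero => rw [mul_zero]; exact zero_mem _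
    | add u v hu hv hu' hv' => rw [mul_add]; exact add_mem hu' hv'
    | neg u hu hu' =>
      have h := mul_neg (x * a + y * b) u
      rw [h]
      exact neg_mem hu'
  have hlist : ∀ L : List c.Quotient,
      (∀ z ∈ L, ∃ a b, a ∈ C ∧ b ∈ C ∧ z = x * a + y * b) → L.prod ∈ T L.length := by
    intro L
    induction L with
    | nil =>
      intro _
      exact AddSubgroup.subset_closure ⟨0, 0, 1, rfl, one_mem C, by simp⟩
    | cons g L ih =>
      intro hL
      obtain ⟨a, b, ha, hb, rfl⟩ := hL g List.mem_cons_self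
      rw [List.prod_cons, List.length_cons]
      exact hstep _ a b ha hb _ (ih fun z hz => hL z (List.mem_cons_of_mem _ hz))
  have hTzero : ∀ z ∈ T (p + q), z = 0 := by
    intro z hz
    have hle : T (p + q) ≤ (⊥ : AddSubgroup c.Quotient) := by
      rw [hTdef]
      rw [AddSubgroup.closure_le]
      rintro w ⟨s, t, cc, hst, hcc, rfl⟩
      simp only [SetLike.mem_coe, AddSubgroup.mem_bot]
      rcases (show p ≤ s ∨ q ≤ t by omega) with h | h
      · have : x ^ s = 0 := by
          rw [show s = p + (s - p) by omega, pow_add, hxp, zero_mul]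
        rw [this, zero_mul, zero_mul]
      · have : y ^ t = 0 := by
          rw [show t = q + (t - q) by omega, pow_add, hyq, zero_mul]
        rw [this, mul_zero, zero_mul]
    exact AddSubgroup.mem_bot.mp (hle hz)
  refine ⟨p + q, by omega, ?_⟩
  intro f hf
  apply hzero'
  have hmap : π (List.ofFn f).prod = (List.ofFn (fun i => π (f i))).prod := by
    rw [map_list_prod, List.map_ofFn]
    rfl
  rw [hmap]
  apply hTzero
  have := hlist (List.ofFn (fun i => π (f i))) ?_
  · rwa [List.length_ofFn] at this
  · intro z hz
    rw [List.mem_ofFn] at hz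
    obtain ⟨i, rfl⟩ := hz
    obtain ⟨a, b, ha, hb, hfi⟩ := hFmem (f i) (hf i)
    refine ⟨π a, π b, hmemC a ha, hmemC b hb, ?_⟩
    show π (f i) = x * π a + y * π b
    rw [hfi, map_add, map_mul, map_mul]
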